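/- Let 1/2 ≤ H₁ < H₂ < 1. With φ(s,u) = (min(s,u))^{1-2H₁} u^{2H₁-1} |s-u|^{2H₂-2H₁-1}, the map u ↦ φ(·,u) from [0,T] to L¹[0,T] is continuous; that is, for every u₁ ∈ [0,T], ∫₀ᵀ |φ(s,u) - φ(s,u₁)| ds → 0 as u → u₁. -/

import Mathlib

open MeasureTheory Filter

noncomputable def phi (H₁ H₂ s u : ℝ) : ℝ :=
  if u = 0 then s ^ (2*H₂ - 2*H₁ - 1)
  else (min s u) ^ (1 - 2*H₁) * u ^ (2*H₁ - 1) * |s - u| ^ (2*H₂ - 2*H₁ - 1)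

open intervalIntegral

lemma phi_zero (H₁ H₂ s : ℝ) : phi H₁ H₂ s 0 = s ^ (2*H₂ - 2*H₁ - 1) := if_pos rfl

lemma phi_left {H₁ H₂ s u : ℝ} (hu : u ≠ 0) (hsu : s ≤ u) :
    phi H₁ H₂ s u = s ^ (1 - 2*H₁) * u ^ (2*H₁ - 1) * (u - s) ^ (2*H₂ - 2*H₁ - 1) := by
  rw [phi, if_neg hu, min_eq_left hsu, abs_sub_comm, abs_of_nonneg (by linarith)]

lemma phi_right {H₁ H₂ s u : ℝ} (hu : 0 < u) (hsu : u ≤ s) :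
    phi H₁ H₂ s u = (s - u) ^ (2*H₂ - 2*H₁ - 1) := by
  rw [phi, if_neg hu.ne', min_eq_right hsu, abs_of_nonneg (by linarith),
    ← Real.rpow_add hu, show 1 - 2*H₁ + (2*H₁ - 1) = 0 by ring, Real.rpow_zero, one_mul]

lemma phi_meas (H₁ H₂ u : ℝ) : Measurable (fun s => phi H₁ H₂ s u) := by
  unfold phi
  by_cases hu : u = 0
  · simp only [hu, if_pos rfl]
    measurability
  · simp only [if_neg hu]
    measurability

lemma phi_nonneg {H₁ H₂ s u : ℝ} (hs : 0 ≤ s) (hu : 0 ≤ u) : 0 ≤ phi H₁ H₂ s u := by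
  unfold phi
  split_ifs
  · exact Real.rpow_nonneg hs _
  · have h1 : (0:ℝ) ≤ min s u := le_min hs hu
    positivity

lemma kerInt {p q c : ℝ} (hp : -1 < p) (hq : -1 < q) (hc : 0 < c) (K : ℝ) :
    IntervalIntegrable (fun s => s ^ p * K * (c - s) ^ q) volume 0 c := by
  have piece1 : IntervalIntegrable (fun s => s ^ p * K * (c - s) ^ q) volume 0 (c/2) := by
    have hf : IntervalIntegrable (fun s : ℝ => s ^ p * K) volume 0 (c/2) :=
      (intervalIntegrable_rpow' hp).mul_const K
    have hg : ContinuousOn (fun s : ℝ => (c - s) ^ q) (Set.uIcc 0 (c/2)) := by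
      apply ContinuousOn.rpow_const (by fun_prop)
      intro x hx
      rw [Set.uIcc_of_le (by linarith)] at hx
      left; intro h; nlinarith [hx.1, hx.2]
    exact hf.mul_continuousOn hg
  have piece2 : IntervalIntegrable (fun s => s ^ p * K * (c - s) ^ q) volume (c/2) c := by
    have hf : IntervalIntegrable (fun s : ℝ => (c - s) ^ q) volume (c/2) c := by
      have := (intervalIntegrable_rpow' hq (a := c - c/2) (b := c - c)).comp_sub_left c
      simpa using this
    have hg : ContinuousOn (fun s : ℝ => s ^ p * K) (Set.uIcc (c/2) c) := by
      apply ContinuousOn.mul _ continuousOn_const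
      apply ContinuousOn.rpow_const (by fun_prop)
      intro x hx
      rw [Set.uIcc_of_le (by linarith)] at hx
      left; intro h; nlinarith [hx.1]
    exact hf.continuousOn_mul hg
  exact piece1.trans piece2

section
variable {H₁ H₂ : ℝ} (h1 : 1/2 ≤ H₁) (h12 : H₁ < H₂) (h2 : H₂ < 1)

include h1 h12 h2

lemma exps : -1 < 2*H₂ - 2*H₁ - 1 ∧ 2*H₂ - 2*H₁ - 1 < 0 ∧ -1 < 1 - 2*H₁ ∧
    0 < 2*H₂ - 2*H₁ := by
  constructor
  · linarith
  constructor
  · linarith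
  constructor
  · linarith
  · linarith

lemma phi_int_left {u : ℝ} (hu : 0 < u) :
    IntervalIntegrable (fun s => phi H₁ H₂ s u) volume 0 u := by
  obtain ⟨hα, hα0, hγ, hβ⟩ := exps h1 h12 h2
  rw [intervalIntegrable_iff, Set.uIoc_of_le hu.le]
  have hker := kerInt hγ hα hu (u ^ (2*H₁ - 1))
  rw [intervalIntegrable_iff, Set.uIoc_of_le hu.le] at hker
  exact hker.congr_fun
    (fun s hs => (phi_left hu.ne' hs.2).symm) measurableSet_Ioc

lemma phi_int_right {u T : ℝ} (hu : 0 < u) (huT : u ≤ T) :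
    IntervalIntegrable (fun s => phi H₁ H₂ s u) volume u T := by
  obtain ⟨hα, hα0, hγ, hβ⟩ := exps h1 h12 h2
  rw [intervalIntegrable_iff, Set.uIoc_of_le huT]
  have hker : IntervalIntegrable (fun x : ℝ => (x - u) ^ (2*H₂ - 2*H₁ - 1)) volume u T := by
    have := (intervalIntegrable_rpow' hα (a := 0) (b := T - u)).comp_sub_right u
    simpa using this
  rw [intervalIntegrable_iff, Set.uIoc_of_le huT] at hker
  exact hker.congr_fun
    (fun s hs => (phi_right hu hs.1.le).symm) measurableSet_Ioc

lemma phi_intOn {u T : ℝ} (hT : 0 < T) (hu : u ∈ Set.Icc 0 T) :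
    IntervalIntegrable (fun s => phi H₁ H₂ s u) volume 0 T := by
  obtain ⟨hα, hα0, hγ, hβ⟩ := exps h1 h12 h2
  rcases eq_or_lt_of_le hu.1 with h0 | h0
  · have : (fun s => phi H₁ H₂ s u) = fun s : ℝ => s ^ (2*H₂ - 2*H₁ - 1) := by
      funext s; rw [← h0, phi_zero]
    rw [this]
    exact intervalIntegrable_rpow' hα
  · exact (phi_int_left h1 h12 h2 h0).trans (phi_int_right h1 h12 h2 h0 hu.2)

end

section
variable {H₁ H₂ : ℝ} (h1 : 1/2 ≤ H₁) (h12 : H₁ < H₂) (h2 : H₂ < 1)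
include h1 h12 h2

lemma phi_integral {u T : ℝ} (hT : 0 < T) (hu : u ∈ Set.Icc 0 T) :
    ∫ s in (0:ℝ)..T, phi H₁ H₂ s u
      = (∫ t in (0:ℝ)..1, t ^ (1 - 2*H₁) * (1 - t) ^ (2*H₂ - 2*H₁ - 1)) * u ^ (2*H₂ - 2*H₁)
        + (T - u) ^ (2*H₂ - 2*H₁) / (2*H₂ - 2*H₁) := by
  obtain ⟨hα, hα0, hγ, hβ⟩ := exps h1 h12 h2
  set C : ℝ := ∫ t in (0:ℝ)..1, t ^ (1 - 2*H₁) * (1 - t) ^ (2*H₂ - 2*H₁ - 1) with hC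
  rcases eq_or_lt_of_le hu.1 with h0 | h0
  · have he : (fun s => phi H₁ H₂ s u) = fun s : ℝ => s ^ (2*H₂ - 2*H₁ - 1) := by
      funext s; rw [← h0, phi_zero]
    rw [he, integral_rpow (Or.inl hα), ← h0,
      Real.zero_rpow (x := 2*H₂ - 2*H₁ - 1 + 1) (by linarith),
      Real.zero_rpow (x := 2*H₂ - 2*H₁) (by linarith), sub_zero, mul_zero, zero_add,
      show 2*H₂ - 2*H₁ - 1 + 1 = 2*H₂ - 2*H₁ by ring, sub_zero]
  · -- u > 0
    rw [← integral_add_adjacent_intervals (phi_int_left h1 h12 h2 h0)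
        (phi_int_right h1 h12 h2 h0 hu.2)]
    have hL : ∫ s in (0:ℝ)..u, phi H₁ H₂ s u = C * u ^ (2*H₂ - 2*H₁) := by
      have e1 : ∫ s in (0:ℝ)..u, phi H₁ H₂ s u
          = ∫ s in (0:ℝ)..u, u ^ (2*H₁ - 1) * (s ^ (1 - 2*H₁) * (u - s) ^ (2*H₂ - 2*H₁ - 1)) := by
        apply integral_congr
        intro s hs
        rw [Set.uIcc_of_le h0.le] at hs
        show phi H₁ H₂ s u
          = u ^ (2*H₁ - 1) * (s ^ (1 - 2*H₁) * (u - s) ^ (2*H₂ - 2*H₁ - 1))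
        rw [phi_left h0.ne' hs.2]; ring
      rw [e1, intervalIntegral.integral_const_mul]
      have e2 : (u • ∫ t in (0:ℝ)..1,
            (u * t) ^ (1 - 2*H₁) * (u - u * t) ^ (2*H₂ - 2*H₁ - 1))
          = ∫ s in (0:ℝ)..u, s ^ (1 - 2*H₁) * (u - s) ^ (2*H₂ - 2*H₁ - 1) := by
        have := smul_integral_comp_mul_left
          (fun s => s ^ (1 - 2*H₁) * (u - s) ^ (2*H₂ - 2*H₁ - 1)) u (a := 0) (b := 1)
        simpa using this
      have e3 : ∫ t in (0:ℝ)..1, (u * t) ^ (1 - 2*H₁) * (u - u * t) ^ (2*H₂ - 2*H₁ - 1)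
          = ∫ t in (0:ℝ)..1, (u ^ (1 - 2*H₁) * u ^ (2*H₂ - 2*H₁ - 1))
              * (t ^ (1 - 2*H₁) * (1 - t) ^ (2*H₂ - 2*H₁ - 1)) := by
        apply integral_congr
        intro t ht
        rw [Set.uIcc_of_le zero_le_one] at ht
        show (u * t) ^ (1 - 2*H₁) * (u - u * t) ^ (2*H₂ - 2*H₁ - 1)
          = u ^ (1 - 2*H₁) * u ^ (2*H₂ - 2*H₁ - 1)
              * (t ^ (1 - 2*H₁) * (1 - t) ^ (2*H₂ - 2*H₁ - 1))
        rw [Real.mul_rpow h0.le ht.1, show u - u * t = u * (1 - t) by ring,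
          Real.mul_rpow h0.le (by linarith [ht.2])]
        ring
      rw [← e2, e3, intervalIntegral.integral_const_mul, ← hC, smul_eq_mul]
      rw [show (2:ℝ)*H₂ - 2*H₁ = (2*H₁ - 1) + (1 + ((1 - 2*H₁) + (2*H₂ - 2*H₁ - 1))) by ring,
        Real.rpow_add h0, Real.rpow_add h0, Real.rpow_add h0, Real.rpow_one]
      ring
    have hR : ∫ s in u..T, phi H₁ H₂ s u
        = (T - u) ^ (2*H₂ - 2*H₁) / (2*H₂ - 2*H₁) := by
      have e1 : ∫ s in u..T, phi H₁ H₂ s u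
          = ∫ s in u..T, (s - u) ^ (2*H₂ - 2*H₁ - 1) := by
        apply integral_congr
        intro s hs
        rw [Set.uIcc_of_le hu.2] at hs
        exact phi_right h0 hs.1
      have e2 := integral_comp_sub_right (a := u) (b := T)
        (fun x : ℝ => x ^ (2*H₂ - 2*H₁ - 1)) u
      rw [e1, e2, sub_self, integral_rpow (Or.inl hα), Real.zero_rpow
        (by linarith : 2*H₂ - 2*H₁ - 1 + 1 ≠ 0), sub_zero,
        show 2*H₂ - 2*H₁ - 1 + 1 = 2*H₂ - 2*H₁ by ring]
    rw [hL, hR]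

end

section
variable {H₁ H₂ : ℝ} (h1 : 1/2 ≤ H₁) (h12 : H₁ < H₂) (h2 : H₂ < 1)
include h1 h12 h2

lemma phi_tendsto {s u₁ T : ℝ} (hs : 0 < s) (hsu : s ≠ u₁) (hu₁0 : 0 ≤ u₁) :
    Tendsto (fun u => phi H₁ H₂ s u) (nhdsWithin u₁ (Set.Icc 0 T))
      (nhds (phi H₁ H₂ s u₁)) := by
  obtain ⟨hα, hα0, hγ, hβ⟩ := exps h1 h12 h2
  rcases eq_or_lt_of_le hu₁0 with h0 | h0
  · -- u₁ = 0
    have hs' : u₁ < s := by rw [← h0]; exact hs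
    have hev : ∀ᶠ u in nhdsWithin u₁ (Set.Icc 0 T),
        (fun u => (s - u) ^ (2*H₂ - 2*H₁ - 1)) u = phi H₁ H₂ s u := by
      filter_upwards [self_mem_nhdsWithin,
        (eventually_lt_nhds hs').filter_mono nhdsWithin_le_nhds] with u huI hult
      rcases eq_or_lt_of_le huI.1 with h' | h'
      · rw [← h', phi_zero, sub_zero]
      · rw [phi_right h' hult.le]
    have hcont : Tendsto (fun u : ℝ => (s - u) ^ (2*H₂ - 2*H₁ - 1)) (nhds u₁)
        (nhds ((s - u₁) ^ (2*H₂ - 2*H₁ - 1))) := by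
      apply ContinuousAt.tendsto
      exact ContinuousAt.rpow_const ((continuous_const.sub continuous_id).continuousAt)
        (Or.inl (sub_ne_zero.mpr (Ne.symm (ne_of_lt hs'))))
    have : phi H₁ H₂ s u₁ = (s - u₁) ^ (2*H₂ - 2*H₁ - 1) := by
      rw [← h0, phi_zero, sub_zero]
    rw [this]
    exact Tendsto.congr' hev (hcont.mono_left nhdsWithin_le_nhds)
  · -- u₁ > 0
    have hev : ∀ᶠ u in nhdsWithin u₁ (Set.Icc 0 T),
        (fun u : ℝ => (min s u) ^ (1 - 2*H₁) * u ^ (2*H₁ - 1)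
          * |s - u| ^ (2*H₂ - 2*H₁ - 1)) u = phi H₁ H₂ s u := by
      filter_upwards [(eventually_gt_nhds h0).filter_mono nhdsWithin_le_nhds] with u hu
      rw [phi, if_neg hu.ne']
    have c1 : ContinuousAt (fun u : ℝ => (min s u) ^ (1 - 2*H₁)) u₁ :=
      ContinuousAt.rpow_const ((continuous_const.min continuous_id).continuousAt)
        (Or.inl (lt_min hs h0).ne')
    have c2 : ContinuousAt (fun u : ℝ => u ^ (2*H₁ - 1)) u₁ :=
      ContinuousAt.rpow_const continuousAt_id (Or.inl h0.ne')
    have c3 : ContinuousAt (fun u : ℝ => |s - u| ^ (2*H₂ - 2*H₁ - 1)) u₁ :=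
      ContinuousAt.rpow_const ((continuous_const.sub continuous_id).abs.continuousAt)
        (Or.inl (abs_ne_zero.mpr (sub_ne_zero.mpr hsu)))
    have hcont := ((c1.mul c2).mul c3).tendsto
    have : phi H₁ H₂ s u₁ = (min s u₁) ^ (1 - 2*H₁) * u₁ ^ (2*H₁ - 1)
        * |s - u₁| ^ (2*H₂ - 2*H₁ - 1) := by rw [phi, if_neg h0.ne']
    rw [this]
    exact Tendsto.congr' hev (hcont.mono_left nhdsWithin_le_nhds)

end

theorem stmt2 (H₁ H₂ T : ℝ) (h1 : 1/2 ≤ H₁) (h12 : H₁ < H₂) (h2 : H₂ < 1) (hT : 0 < T)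
    (u₁ : ℝ) (hu₁ : u₁ ∈ Set.Icc 0 T) :
    Tendsto (fun u => ∫ s in (0:ℝ)..T, |phi H₁ H₂ s u - phi H₁ H₂ s u₁|)
      (nhdsWithin u₁ (Set.Icc 0 T)) (nhds 0) := by
  obtain ⟨hα, hα0, hγ, hβ⟩ := exps h1 h12 h2
  set l := nhdsWithin u₁ (Set.Icc 0 T) with hl
  set C : ℝ := ∫ t in (0:ℝ)..1, t ^ (1 - 2*H₁) * (1 - t) ^ (2*H₂ - 2*H₁ - 1) with hC
  set G : ℝ → ℝ := fun u => C * u ^ (2*H₂ - 2*H₁) + (T - u) ^ (2*H₂ - 2*H₁) / (2*H₂ - 2*H₁)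
    with hG
  -- integrability on Ioc 0 T
  have hint : ∀ u ∈ Set.Icc (0:ℝ) T,
      IntegrableOn (fun s => phi H₁ H₂ s u) (Set.Ioc 0 T) volume := by
    intro u hu
    have := phi_intOn h1 h12 h2 hT hu
    rwa [intervalIntegrable_iff, Set.uIoc_of_le hT.le] at this
  -- the formula, as set integrals
  have hform : ∀ u ∈ Set.Icc (0:ℝ) T, ∫ s in Set.Ioc 0 T, phi H₁ H₂ s u = G u := by
    intro u hu
    rw [← intervalIntegral.integral_of_le hT.le]
    exact phi_integral h1 h12 h2 hT hu
  -- Tendsto of G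
  have hrc : Continuous fun x : ℝ => x ^ (2*H₂ - 2*H₁) := by
    rw [continuous_iff_continuousAt]
    exact fun x => Real.continuousAt_rpow_const x _ (Or.inr hβ.le)
  have hGcont : Tendsto G l (nhds (G u₁)) := by
    have : Continuous G :=
      (continuous_const.mul hrc).add
        ((hrc.comp (continuous_const.sub continuous_id)).div_const _)
    exact (this.continuousAt.tendsto).mono_left nhdsWithin_le_nhds
  -- tendsto of the min-integral via dominated convergence
  have hM : Tendsto (fun u => ∫ s in Set.Ioc (0:ℝ) T,
        min (phi H₁ H₂ s u) (phi H₁ H₂ s u₁)) l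
      (nhds (∫ s in Set.Ioc (0:ℝ) T, phi H₁ H₂ s u₁)) := by
    apply MeasureTheory.tendsto_integral_filter_of_dominated_convergence (fun s => phi H₁ H₂ s u₁)
    · exact Eventually.of_forall fun u =>
        ((phi_meas H₁ H₂ u).min (phi_meas H₁ H₂ u₁)).aestronglyMeasurable
    · filter_upwards [self_mem_nhdsWithin] with u hu
      refine (ae_restrict_iff' measurableSet_Ioc).2 (Eventually.of_forall fun s hs => ?_)
      rw [Real.norm_eq_abs, abs_of_nonneg
        (le_min (phi_nonneg hs.1.le hu.1) (phi_nonneg hs.1.le hu₁.1))]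
      exact min_le_right _ _
    · exact hint u₁ hu₁
    · have hne : ∀ᵐ s : ℝ ∂volume, s ≠ u₁ := by
        rw [ae_iff]
        simp only [not_not, Set.setOf_eq_eq_singleton]
        exact measure_singleton u₁
      have hae : ∀ᵐ s ∂(volume.restrict (Set.Ioc (0:ℝ) T)), s ∈ Set.Ioc (0:ℝ) T ∧ s ≠ u₁ :=
        (ae_restrict_mem measurableSet_Ioc).and (ae_restrict_of_ae hne)
      filter_upwards [hae] with s hs
      have := Tendsto.min (phi_tendsto h1 h12 h2 (T := T) hs.1.1 hs.2 hu₁.1)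
        (tendsto_const_nhds (x := phi H₁ H₂ s u₁))
      simpa [min_self] using this
  -- pointwise algebraic identity
  have habs : ∀ a b : ℝ, |a - b| = a + b - 2 * min a b := by
    intro a b
    rcases le_total a b with h | h
    · rw [min_eq_left h, abs_of_nonpos (by linarith)]; ring
    · rw [min_eq_right h, abs_of_nonneg (by linarith)]; ring
  -- the key eventual identity
  have key : ∀ᶠ u in l, (fun u => G u + G u₁ - 2 * ∫ s in Set.Ioc (0:ℝ) T,
      min (phi H₁ H₂ s u) (phi H₁ H₂ s u₁)) u
        = ∫ s in (0:ℝ)..T, |phi H₁ H₂ s u - phi H₁ H₂ s u₁| := by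
    filter_upwards [self_mem_nhdsWithin] with u hu
    have hu' := hint u hu
    have hu₁' := hint u₁ hu₁
    have hmin : IntegrableOn (fun s => min (phi H₁ H₂ s u) (phi H₁ H₂ s u₁))
        (Set.Ioc 0 T) volume := hu'.inf hu₁'
    rw [intervalIntegral.integral_of_le hT.le]
    have e1 : ∫ s in Set.Ioc (0:ℝ) T, |phi H₁ H₂ s u - phi H₁ H₂ s u₁|
        = ∫ s in Set.Ioc (0:ℝ) T, (phi H₁ H₂ s u + phi H₁ H₂ s u₁
            - 2 * min (phi H₁ H₂ s u) (phi H₁ H₂ s u₁)) := by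
      simp only [habs]
    have hadd : IntegrableOn (fun s => phi H₁ H₂ s u + phi H₁ H₂ s u₁)
        (Set.Ioc 0 T) volume := hu'.add hu₁'
    have hmul : IntegrableOn (fun s => 2 * min (phi H₁ H₂ s u) (phi H₁ H₂ s u₁))
        (Set.Ioc 0 T) volume := hmin.const_mul 2
    rw [e1, integral_sub hadd hmul, integral_add hu' hu₁',
      MeasureTheory.integral_const_mul, hform u hu, hform u₁ hu₁]
  -- conclude
  have hlim : Tendsto (fun u => G u + G u₁ - 2 * ∫ s in Set.Ioc (0:ℝ) T,
      min (phi H₁ H₂ s u) (phi H₁ H₂ s u₁)) l (nhds 0) := by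
    have h' : Tendsto (fun u => G u + G u₁ - 2 * ∫ s in Set.Ioc (0:ℝ) T,
        min (phi H₁ H₂ s u) (phi H₁ H₂ s u₁)) l
        (nhds (G u₁ + G u₁ - 2 * ∫ s in Set.Ioc (0:ℝ) T, phi H₁ H₂ s u₁)) :=
      Tendsto.sub (hGcont.add (tendsto_const_nhds (x := G u₁))) (hM.const_mul 2)
    rw [hform u₁ hu₁] at h'
    have h0 : G u₁ + G u₁ - 2 * G u₁ = 0 := by ring
    rw [h0] at h'
    exact h'
  exact Tendsto.congr' key hlim
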